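/- Let n and l be positive integers and let T_(1),…,T_(l) be pairwise disjoint subsets of {1,…,n}. For i = 1,…,l let B_i be an n×n real symmetric matrix whose (p,q) entry vanishes unless p ∈ T_(i) and q ∈ T_(i); and for i = 1,…,l−1 let C_i be an n×n real matrix whose (p,q) entry vanishes unless p ∈ T_(i) and q ∈ T_(i+1). Then ‖Σ_{i=1}^{l} B_i + Σ_{i=1}^{l−1} (C_i + C_iᵀ)‖₂ ≤ max_{1≤i≤l} ‖B_i‖₂ + 2 · max_{1≤i≤l−1} ‖C_i‖₂. -/

import Mathlib

open Matrix

/-- Spectral norm (largest singular value) of a real matrix. -/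
noncomputable def specNorm {m n : Type*} [Fintype m] [Fintype n] [DecidableEq n]
    (A : Matrix m n ℝ) : ℝ :=
  ‖LinearMap.toContinuousLinearMap (Matrix.toEuclideanLin A)‖

section Aux

open Finset Real

variable {n : ℕ}

private lemma inner_dot_aux (M : Matrix (Fin n) (Fin n) ℝ) (X Y : EuclideanSpace ℝ (Fin n)) :
    (inner ℝ Y ((Matrix.toEuclideanLin M) X) : ℝ) =
      (WithLp.equiv 2 (Fin n → ℝ) Y) ⬝ᵥ (M *ᵥ (WithLp.equiv 2 (Fin n → ℝ) X)) := by
  simp only [PiLp.inner_apply, RCLike.inner_apply, conj_trivial, dotProduct,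
    Matrix.ofLp_toEuclideanLin_apply]
  exact Finset.sum_congr rfl fun i _ => mul_comm _ _

private lemma norm_eq_sqrt_aux (X : EuclideanSpace ℝ (Fin n)) :
    ‖X‖ = Real.sqrt (∑ p, ((WithLp.equiv 2 (Fin n → ℝ)) X) p ^ 2) := by
  rw [EuclideanSpace.norm_eq]
  simp only [Real.norm_eq_abs, sq_abs]
  rfl

private lemma bilin_bound_aux (M : Matrix (Fin n) (Fin n) ℝ) (x y : Fin n → ℝ) :
    |y ⬝ᵥ (M *ᵥ x)| ≤ specNorm M *
      (Real.sqrt (∑ p, x p ^ 2) * Real.sqrt (∑ p, y p ^ 2)) := by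
  set X : EuclideanSpace ℝ (Fin n) := (WithLp.equiv 2 (Fin n → ℝ)).symm x with hXdef
  set Y : EuclideanSpace ℝ (Fin n) := (WithLp.equiv 2 (Fin n → ℝ)).symm y with hYdef
  have hx : (WithLp.equiv 2 (Fin n → ℝ)) X = x := by simp [hXdef]
  have hy : (WithLp.equiv 2 (Fin n → ℝ)) Y = y := by simp [hYdef]
  have h1 : y ⬝ᵥ (M *ᵥ x) = (inner ℝ Y ((Matrix.toEuclideanLin M) X) : ℝ) := by
    rw [inner_dot_aux, hx, hy]
  have h2 : |(inner ℝ Y ((Matrix.toEuclideanLin M) X) : ℝ)| ≤ ‖Y‖ * ‖(Matrix.toEuclideanLin M) X‖ :=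
    abs_real_inner_le_norm _ _
  have h3 : ‖(Matrix.toEuclideanLin M) X‖ ≤ specNorm M * ‖X‖ := by
    exact (LinearMap.toContinuousLinearMap (Matrix.toEuclideanLin M)).le_opNorm X
  have hX : ‖X‖ = Real.sqrt (∑ p, x p ^ 2) := by rw [norm_eq_sqrt_aux, hx]
  have hY : ‖Y‖ = Real.sqrt (∑ p, y p ^ 2) := by rw [norm_eq_sqrt_aux, hy]
  calc |y ⬝ᵥ (M *ᵥ x)| ≤ ‖Y‖ * ‖(Matrix.toEuclideanLin M) X‖ := by rw [h1]; exact h2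
    _ ≤ ‖Y‖ * (specNorm M * ‖X‖) :=
        mul_le_mul_of_nonneg_left h3 (norm_nonneg _)
    _ = specNorm M * (Real.sqrt (∑ p, x p ^ 2) * Real.sqrt (∑ p, y p ^ 2)) := by
        rw [hX, hY]; ring

private lemma sq_sum_restrict_aux (S : Finset (Fin n)) (v : Fin n → ℝ) :
    (∑ p, (if p ∈ S then v p else 0) ^ 2) = ∑ p ∈ S, v p ^ 2 := by
  have h : ∀ p, (if p ∈ S then v p else 0) ^ 2 = if p ∈ S then v p ^ 2 else 0 := by
    intro p; split <;> simp
  simp_rw [h]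
  rw [Finset.sum_ite_mem, Finset.univ_inter]

private lemma dot_restrict_aux (M : Matrix (Fin n) (Fin n) ℝ) (S S' : Finset (Fin n))
    (hM : ∀ p q, ¬(p ∈ S ∧ q ∈ S') → M p q = 0) (x y : Fin n → ℝ) :
    y ⬝ᵥ (M *ᵥ x) =
      (fun p => if p ∈ S then y p else 0) ⬝ᵥ (M *ᵥ fun q => if q ∈ S' then x q else 0) := by
  simp only [dotProduct, mulVec, Finset.mul_sum]
  apply Finset.sum_congr rfl
  intro p _
  apply Finset.sum_congr rfl
  intro q _
  by_cases h : p ∈ S ∧ q ∈ S'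
  · simp [h.1, h.2]
  · rw [hM p q h]; simp

private lemma block_bound_aux (M : Matrix (Fin n) (Fin n) ℝ) (S S' : Finset (Fin n))
    (hM : ∀ p q, ¬(p ∈ S ∧ q ∈ S') → M p q = 0) (x y : Fin n → ℝ) :
    |y ⬝ᵥ (M *ᵥ x)| ≤ specNorm M *
      (Real.sqrt (∑ q ∈ S', x q ^ 2) * Real.sqrt (∑ p ∈ S, y p ^ 2)) := by
  rw [dot_restrict_aux M S S' hM x y]
  have := bilin_bound_aux M (fun q => if q ∈ S' then x q else 0)
    (fun p => if p ∈ S then y p else 0)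
  rwa [sq_sum_restrict_aux, sq_sum_restrict_aux] at this

private lemma sumsq_le_aux (I : Finset ℕ) (S : ℕ → Finset (Fin n))
    (hd : ∀ i ∈ I, ∀ j ∈ I, i ≠ j → Disjoint (S i) (S j)) (x : Fin n → ℝ) :
    ∑ i ∈ I, ∑ p ∈ S i, x p ^ 2 ≤ ∑ p, x p ^ 2 := by
  rw [← Finset.sum_biUnion (fun i hi j hj hij => hd i hi j hj hij)]
  exact Finset.sum_le_sum_of_subset_of_nonneg (Finset.subset_univ _)
    (fun _ _ _ => sq_nonneg _)

private lemma opNorm_le_of_inner_aux {E : Type*} [NormedAddCommGroup E]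
    [InnerProductSpace ℝ E] (f : E →L[ℝ] E) {K : ℝ} (hK : 0 ≤ K)
    (h : ∀ x y : E, |(inner ℝ y (f x) : ℝ)| ≤ K * (‖x‖ * ‖y‖)) : ‖f‖ ≤ K := by
  apply f.opNorm_le_bound hK
  intro x
  have h2 := h x (f x)
  rw [real_inner_self_eq_norm_sq, abs_of_nonneg (sq_nonneg _)] at h2
  by_cases h0 : ‖f x‖ = 0
  · rw [h0]; positivity
  · have hpos : 0 < ‖f x‖ := lt_of_le_of_ne (norm_nonneg _) (Ne.symm h0)
    nlinarith [norm_nonneg x]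

private lemma specNorm_le_of_dot_aux (M : Matrix (Fin n) (Fin n) ℝ) {K : ℝ} (hK : 0 ≤ K)
    (h : ∀ x y : Fin n → ℝ, |y ⬝ᵥ (M *ᵥ x)| ≤
      K * (Real.sqrt (∑ p, x p ^ 2) * Real.sqrt (∑ p, y p ^ 2))) :
    specNorm M ≤ K := by
  apply opNorm_le_of_inner_aux _ hK
  intro X Y
  have hcoe : (LinearMap.toContinuousLinearMap (Matrix.toEuclideanLin M)) X =
      (Matrix.toEuclideanLin M) X := rfl
  rw [hcoe, inner_dot_aux, norm_eq_sqrt_aux X, norm_eq_sqrt_aux Y]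
  exact h _ _

end Aux

/-- Spectral norm bound for a symmetric block tridiagonal matrix:
at most the maximum diagonal-block norm plus twice the maximum off-diagonal-block norm. -/
theorem stmt2 {n l : ℕ} (hn : 0 < n) (hl : 0 < l)
    (T : ℕ → Finset (Fin n))
    (hdisj : ∀ i j, 1 ≤ i → i ≤ l → 1 ≤ j → j ≤ l → i ≠ j → Disjoint (T i) (T j))
    (B C : ℕ → Matrix (Fin n) (Fin n) ℝ)
    (hBsym : ∀ i, 1 ≤ i → i ≤ l → (B i)ᵀ = B i)
    (hBsupp : ∀ i, 1 ≤ i → i ≤ l → ∀ p q, ¬(p ∈ T i ∧ q ∈ T i) → B i p q = 0)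
    (hCsupp : ∀ i, 1 ≤ i → i ≤ l - 1 → ∀ p q, ¬(p ∈ T i ∧ q ∈ T (i + 1)) → C i p q = 0) :
    specNorm ((∑ i ∈ Finset.Icc 1 l, B i) + ∑ i ∈ Finset.Icc 1 (l - 1), (C i + (C i)ᵀ)) ≤
      (⨆ i : Finset.Icc 1 l, specNorm (B i)) +
        2 * ⨆ i : Finset.Icc 1 (l - 1), specNorm (C i) := by
  classical
  set b := ⨆ i : Finset.Icc 1 l, specNorm (B i) with hbdef
  set c := ⨆ i : Finset.Icc 1 (l - 1), specNorm (C i) with hcdef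
  have hbB : ∀ i, 1 ≤ i → i ≤ l → specNorm (B i) ≤ b := by
    intro i h1 h2
    rw [hbdef]
    exact le_ciSup (f := fun i : (Finset.Icc 1 l : Finset ℕ) => specNorm (B (i : ℕ)))
      (Set.Finite.bddAbove (Set.finite_range _)) ⟨i, Finset.mem_Icc.2 ⟨h1, h2⟩⟩
  have hcC : ∀ i, 1 ≤ i → i ≤ l - 1 → specNorm (C i) ≤ c := by
    intro i h1 h2
    rw [hcdef]
    exact le_ciSup (f := fun i : (Finset.Icc 1 (l - 1) : Finset ℕ) => specNorm (C (i : ℕ)))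
      (Set.Finite.bddAbove (Set.finite_range _)) ⟨i, Finset.mem_Icc.2 ⟨h1, h2⟩⟩
  have hb0 : 0 ≤ b := le_trans (norm_nonneg _) (hbB 1 le_rfl hl)
  have hc0 : 0 ≤ c := by
    by_cases hll : 1 ≤ l - 1
    · exact le_trans (norm_nonneg _) (hcC 1 le_rfl hll)
    · have hempty : IsEmpty (Finset.Icc 1 (l - 1) : Finset ℕ) := by
        rw [Finset.isEmpty_coe_sort]
        exact Finset.Icc_eq_empty (by omega)
      rw [hcdef, Real.iSup_of_isEmpty]
  set A := (∑ i ∈ Finset.Icc 1 l, B i) + ∑ i ∈ Finset.Icc 1 (l - 1), (C i + (C i)ᵀ) with hAdef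
  apply specNorm_le_of_dot_aux A (by positivity)
  intro x y
  set nx : ℕ → ℝ := fun i => Real.sqrt (∑ p ∈ T i, x p ^ 2) with hnx
  set ny : ℕ → ℝ := fun i => Real.sqrt (∑ p ∈ T i, y p ^ 2) with hny
  set Px : ℝ := Real.sqrt (∑ p, x p ^ 2) with hPx
  set Py : ℝ := Real.sqrt (∑ p, y p ^ 2) with hPy
  have hnx0 : ∀ i, 0 ≤ nx i := fun i => Real.sqrt_nonneg _
  have hny0 : ∀ i, 0 ≤ ny i := fun i => Real.sqrt_nonneg _
  have hPx0 : 0 ≤ Px := Real.sqrt_nonneg _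
  have hPy0 : 0 ≤ Py := Real.sqrt_nonneg _
  -- split the dot product
  have hsplit : y ⬝ᵥ (A *ᵥ x) =
      (∑ i ∈ Finset.Icc 1 l, y ⬝ᵥ (B i *ᵥ x)) +
        ∑ i ∈ Finset.Icc 1 (l - 1), (y ⬝ᵥ (C i *ᵥ x) + x ⬝ᵥ (C i *ᵥ y)) := by
    have hdotlin : ∀ (M N : Matrix (Fin n) (Fin n) ℝ),
        y ⬝ᵥ ((M + N) *ᵥ x) = y ⬝ᵥ (M *ᵥ x) + y ⬝ᵥ (N *ᵥ x) := by
      intro M N; rw [Matrix.add_mulVec, dotProduct_add]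
    have hsum : ∀ (I : Finset ℕ) (f : ℕ → Matrix (Fin n) (Fin n) ℝ),
        y ⬝ᵥ ((∑ i ∈ I, f i) *ᵥ x) = ∑ i ∈ I, y ⬝ᵥ (f i *ᵥ x) := by
      intro I f
      induction I using Finset.induction with
      | empty => simp [Matrix.mulVec]
      | insert _ _ hni ih =>
        rw [Finset.sum_insert hni, hdotlin, ih, Finset.sum_insert hni]
    have htr : ∀ i, y ⬝ᵥ ((C i)ᵀ *ᵥ x) = x ⬝ᵥ (C i *ᵥ y) := by
      intro i
      rw [Matrix.dotProduct_mulVec, Matrix.vecMul_transpose, dotProduct_comm]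
    rw [hAdef, hdotlin, hsum, hsum]
    congr 1
    apply Finset.sum_congr rfl
    intro i _
    rw [hdotlin, htr]
  -- per-term bounds
  have hBterm : ∀ i ∈ Finset.Icc 1 l, |y ⬝ᵥ (B i *ᵥ x)| ≤ b * (nx i * ny i) := by
    intro i hi
    rw [Finset.mem_Icc] at hi
    calc |y ⬝ᵥ (B i *ᵥ x)| ≤ specNorm (B i) * (nx i * ny i) :=
          block_bound_aux (B i) (T i) (T i) (hBsupp i hi.1 hi.2) x y
      _ ≤ b * (nx i * ny i) := by
          apply mul_le_mul_of_nonneg_right (hbB i hi.1 hi.2)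
          exact mul_nonneg (hnx0 i) (hny0 i)
  have hCterm : ∀ i ∈ Finset.Icc 1 (l - 1),
      |y ⬝ᵥ (C i *ᵥ x)| + |x ⬝ᵥ (C i *ᵥ y)| ≤
        c * (nx (i + 1) * ny i) + c * (ny (i + 1) * nx i) := by
    intro i hi
    rw [Finset.mem_Icc] at hi
    have h1 : |y ⬝ᵥ (C i *ᵥ x)| ≤ c * (nx (i + 1) * ny i) := by
      calc |y ⬝ᵥ (C i *ᵥ x)| ≤ specNorm (C i) * (nx (i + 1) * ny i) :=
            block_bound_aux (C i) (T i) (T (i + 1)) (hCsupp i hi.1 hi.2) x y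
        _ ≤ c * (nx (i + 1) * ny i) := by
            apply mul_le_mul_of_nonneg_right (hcC i hi.1 hi.2)
            exact mul_nonneg (hnx0 _) (hny0 _)
    have h2 : |x ⬝ᵥ (C i *ᵥ y)| ≤ c * (ny (i + 1) * nx i) := by
      calc |x ⬝ᵥ (C i *ᵥ y)| ≤ specNorm (C i) * (ny (i + 1) * nx i) :=
            block_bound_aux (C i) (T i) (T (i + 1)) (hCsupp i hi.1 hi.2) y x
        _ ≤ c * (ny (i + 1) * nx i) := by
            apply mul_le_mul_of_nonneg_right (hcC i hi.1 hi.2)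
            exact mul_nonneg (hny0 _) (hnx0 _)
    exact add_le_add h1 h2
  -- Cauchy–Schwarz sums
  have hsq : ∀ (I : Finset ℕ) (S : ℕ → Finset (Fin n)) (v : Fin n → ℝ),
      (∀ i ∈ I, ∀ j ∈ I, i ≠ j → Disjoint (S i) (S j)) →
      Real.sqrt (∑ i ∈ I, (Real.sqrt (∑ p ∈ S i, v p ^ 2)) ^ 2) ≤
        Real.sqrt (∑ p, v p ^ 2) := by
    intro I S v hd
    apply Real.sqrt_le_sqrt
    calc ∑ i ∈ I, (Real.sqrt (∑ p ∈ S i, v p ^ 2)) ^ 2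
        = ∑ i ∈ I, ∑ p ∈ S i, v p ^ 2 := by
          apply Finset.sum_congr rfl
          intro i _
          exact Real.sq_sqrt (Finset.sum_nonneg fun _ _ => sq_nonneg _)
      _ ≤ ∑ p, v p ^ 2 := sumsq_le_aux I S hd v
  have hd1 : ∀ i ∈ Finset.Icc 1 l, ∀ j ∈ Finset.Icc 1 l, i ≠ j → Disjoint (T i) (T j) := by
    intro i hi j hj hij
    rw [Finset.mem_Icc] at hi hj
    exact hdisj i j hi.1 hi.2 hj.1 hj.2 hij
  have hd2 : ∀ i ∈ Finset.Icc 1 (l - 1), ∀ j ∈ Finset.Icc 1 (l - 1), i ≠ j →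
      Disjoint (T (i + 1)) (T (j + 1)) := by
    intro i hi j hj hij
    rw [Finset.mem_Icc] at hi hj
    exact hdisj (i + 1) (j + 1) (by omega) (by omega) (by omega) (by omega) (by omega)
  have hd3 : ∀ i ∈ Finset.Icc 1 (l - 1), ∀ j ∈ Finset.Icc 1 (l - 1), i ≠ j →
      Disjoint (T i) (T j) := by
    intro i hi j hj hij
    rw [Finset.mem_Icc] at hi hj
    exact hdisj i j (by omega) (by omega) (by omega) (by omega) hij
  have hS1 : ∑ i ∈ Finset.Icc 1 l, nx i * ny i ≤ Px * Py := by
    calc ∑ i ∈ Finset.Icc 1 l, nx i * ny i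
        ≤ Real.sqrt (∑ i ∈ Finset.Icc 1 l, nx i ^ 2) *
            Real.sqrt (∑ i ∈ Finset.Icc 1 l, ny i ^ 2) :=
          Real.sum_mul_le_sqrt_mul_sqrt _ _ _
      _ ≤ Px * Py :=
          mul_le_mul (hsq _ T x hd1) (hsq _ T y hd1) (Real.sqrt_nonneg _) hPx0
  have hS2 : ∑ i ∈ Finset.Icc 1 (l - 1), nx (i + 1) * ny i ≤ Px * Py := by
    calc ∑ i ∈ Finset.Icc 1 (l - 1), nx (i + 1) * ny i
        ≤ Real.sqrt (∑ i ∈ Finset.Icc 1 (l - 1), nx (i + 1) ^ 2) *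
            Real.sqrt (∑ i ∈ Finset.Icc 1 (l - 1), ny i ^ 2) :=
          Real.sum_mul_le_sqrt_mul_sqrt _ _ _
      _ ≤ Px * Py :=
          mul_le_mul (hsq _ (fun i => T (i + 1)) x hd2) (hsq _ T y hd3)
            (Real.sqrt_nonneg _) hPx0
  have hS3 : ∑ i ∈ Finset.Icc 1 (l - 1), ny (i + 1) * nx i ≤ Px * Py := by
    calc ∑ i ∈ Finset.Icc 1 (l - 1), ny (i + 1) * nx i
        ≤ Real.sqrt (∑ i ∈ Finset.Icc 1 (l - 1), ny (i + 1) ^ 2) *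
            Real.sqrt (∑ i ∈ Finset.Icc 1 (l - 1), nx i ^ 2) :=
          Real.sum_mul_le_sqrt_mul_sqrt _ _ _
      _ ≤ Py * Px :=
          mul_le_mul (hsq _ (fun i => T (i + 1)) y hd2) (hsq _ T x hd3)
            (Real.sqrt_nonneg _) hPy0
      _ = Px * Py := mul_comm _ _
  -- put it all together
  calc |y ⬝ᵥ (A *ᵥ x)|
      ≤ (∑ i ∈ Finset.Icc 1 l, |y ⬝ᵥ (B i *ᵥ x)|) +
          ∑ i ∈ Finset.Icc 1 (l - 1), (|y ⬝ᵥ (C i *ᵥ x)| + |x ⬝ᵥ (C i *ᵥ y)|) := by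
        rw [hsplit]
        refine (abs_add_le _ _).trans (add_le_add (Finset.abs_sum_le_sum_abs _ _)
          ((Finset.abs_sum_le_sum_abs _ _).trans (Finset.sum_le_sum fun i _ => abs_add_le _ _)))
    _ ≤ (∑ i ∈ Finset.Icc 1 l, b * (nx i * ny i)) +
          ∑ i ∈ Finset.Icc 1 (l - 1), (c * (nx (i + 1) * ny i) + c * (ny (i + 1) * nx i)) :=
        add_le_add (Finset.sum_le_sum hBterm) (Finset.sum_le_sum hCterm)
    _ = b * (∑ i ∈ Finset.Icc 1 l, nx i * ny i) +
          (c * (∑ i ∈ Finset.Icc 1 (l - 1), nx (i + 1) * ny i) +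
            c * (∑ i ∈ Finset.Icc 1 (l - 1), ny (i + 1) * nx i)) := by
        rw [Finset.sum_add_distrib, ← Finset.mul_sum, ← Finset.mul_sum, ← Finset.mul_sum]
    _ ≤ b * (Px * Py) + (c * (Px * Py) + c * (Px * Py)) := by
        gcongr
    _ = (b + 2 * c) * (Px * Py) := by ring
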